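/- Convergence of Types (special case): let V, W, and V_n be real random variables and b_n real constants. If V has a nondegenerate distribution, V_n converges in distribution to V, and V_n + b_n converges in distribution to W, then b = lim_{n→∞} b_n exists and W has the same distribution as V + b. -/

import Mathlib

open MeasureTheory Filter Topology

/-- Convergence in distribution of real random variables, via bounded continuous test
functions. -/
def ConvInDist {Ω : Type*} [MeasurableSpace Ω] (P : Measure Ω)
    (V : ℕ → Ω → ℝ) (W : Ω → ℝ) : Prop :=
  ∀ g : BoundedContinuousFunction ℝ ℝ,
    Tendsto (fun n => ∫ ω, g (V n ω) ∂P) atTop (𝓝 (∫ ω, g (W ω) ∂P))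

open Metric Set


/-- An auxiliary Lipschitz bump function: `1` on `F`, `0` at distance `≥ δ` from `F`. -/
noncomputable def bump (δ : ℝ) (F : Set ℝ) : BoundedContinuousFunction ℝ ℝ :=
  BoundedContinuousFunction.mkOfBound
    ⟨fun x => max 0 (min 1 (1 - infDist x F / δ)),
      continuous_const.max (continuous_const.min
        (continuous_const.sub ((continuous_infDist_pt F).div_const δ)))⟩ 1
    (by
      intro x y
      have hx0 : (0:ℝ) ≤ max 0 (min 1 (1 - infDist x F / δ)) := le_max_left _ _
      have hy0 : (0:ℝ) ≤ max 0 (min 1 (1 - infDist y F / δ)) := le_max_left _ _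
      have hx1 : max 0 (min 1 (1 - infDist x F / δ)) ≤ 1 :=
        max_le zero_le_one (min_le_left _ _)
      have hy1 : max 0 (min 1 (1 - infDist y F / δ)) ≤ 1 :=
        max_le zero_le_one (min_le_left _ _)
      rw [Real.dist_eq, abs_le]
      constructor <;> simp only [ContinuousMap.coe_mk] <;> linarith)

lemma bump_apply (δ : ℝ) (F : Set ℝ) (x : ℝ) :
    bump δ F x = max 0 (min 1 (1 - infDist x F / δ)) := rfl

lemma bump_nonneg (δ : ℝ) (F : Set ℝ) (x : ℝ) : 0 ≤ bump δ F x := le_max_left _ _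

lemma bump_le_one (δ : ℝ) (F : Set ℝ) (x : ℝ) : bump δ F x ≤ 1 :=
  max_le zero_le_one (min_le_left _ _)

lemma bump_eq_one {δ : ℝ} (F : Set ℝ) {x : ℝ} (hx : x ∈ F) : bump δ F x = 1 := by
  rw [bump_apply, infDist_zero_of_mem hx]
  norm_num

lemma bump_eq_zero {δ : ℝ} (hδ : 0 < δ) (F : Set ℝ) {x : ℝ} (h : δ ≤ infDist x F) :
    bump δ F x = 0 := by
  rw [bump_apply]
  have h1 : (1:ℝ) ≤ infDist x F / δ := (one_le_div hδ).2 h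
  have : min 1 (1 - infDist x F / δ) ≤ 0 := (min_le_right _ _).trans (by linarith)
  exact max_eq_left this

lemma bump_lip {δ : ℝ} (hδ : 0 < δ) (F : Set ℝ) (x y : ℝ) :
    |bump δ F x - bump δ F y| ≤ |x - y| / δ := by
  have h1 : infDist x F ≤ infDist y F + dist x y := infDist_le_infDist_add_dist
  have h2 : infDist y F ≤ infDist x F + dist y x := infDist_le_infDist_add_dist
  have hd : dist x y = |x - y| := Real.dist_eq x y
  have hd2 : dist y x = |x - y| := by rw [dist_comm, Real.dist_eq]
  have key : |(1 - infDist x F / δ) - (1 - infDist y F / δ)| ≤ |x - y| / δ := by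
    have e : (1 - infDist x F / δ) - (1 - infDist y F / δ)
        = (infDist y F - infDist x F) / δ := by ring
    rw [e, abs_div, abs_of_pos hδ]
    have : |infDist y F - infDist x F| ≤ |x - y| :=
      abs_sub_le_iff.2 ⟨by linarith, by linarith⟩
    gcongr
  calc |bump δ F x - bump δ F y|
      = |max 0 (min 1 (1 - infDist x F / δ)) - max 0 (min 1 (1 - infDist y F / δ))| := rfl
    _ = |max (min 1 (1 - infDist x F / δ)) 0 - max (min 1 (1 - infDist y F / δ)) 0| := by
        rw [max_comm, max_comm (min 1 (1 - infDist y F / δ))]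
    _ ≤ |min 1 (1 - infDist x F / δ) - min 1 (1 - infDist y F / δ)| :=
        abs_max_sub_max_le_abs _ _ _
    _ ≤ max |(1:ℝ) - 1| |(1 - infDist x F / δ) - (1 - infDist y F / δ)| :=
        abs_min_sub_min_le_max _ _ _ _
    _ ≤ |x - y| / δ := by
        apply max_le _ key
        simp only [sub_self, abs_zero]
        positivity


section helpers

variable {Ω : Type*} [MeasurableSpace Ω] (P : Measure Ω) [IsProbabilityMeasure P]

lemma integrable_comp_bcf (g : BoundedContinuousFunction ℝ ℝ) {X : Ω → ℝ}
    (hX : Measurable X) : Integrable (fun ω => g (X ω)) P := by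
  refine (integrable_const ‖g‖).mono'
    ((g.continuous.measurable.comp hX).aestronglyMeasurable) (ae_of_all _ fun ω => ?_)
  exact g.norm_coe_le_norm _

lemma tendsto_integral_bump {X : Ω → ℝ} (hX : Measurable X) {F : Set ℝ}
    (hF : IsClosed F) (hne : F.Nonempty) :
    Tendsto (fun n : ℕ => ∫ ω, bump ((n:ℝ)+1)⁻¹ F (X ω) ∂P) atTop
      (𝓝 (P (X ⁻¹' F)).toReal) := by
  have hind : (P (X ⁻¹' F)).toReal = ∫ ω, (X ⁻¹' F).indicator (1 : Ω → ℝ) ω ∂P :=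
    (integral_indicator_one (hX hF.measurableSet)).symm
  rw [hind]
  apply tendsto_integral_of_dominated_convergence (fun _ => (1:ℝ))
  · intro n
    exact ((bump _ F).continuous.measurable.comp hX).aestronglyMeasurable
  · exact integrable_const 1
  · intro n
    refine ae_of_all _ fun ω => ?_
    rw [Real.norm_eq_abs, abs_le]
    exact ⟨by linarith [bump_nonneg (((n:ℝ)+1)⁻¹) F (X ω)], bump_le_one _ _ _⟩
  · refine ae_of_all _ fun ω => ?_
    by_cases hmem : X ω ∈ F
    · rw [indicator_of_mem (Set.mem_preimage.2 hmem)]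
      simp only [Pi.one_apply]
      exact tendsto_const_nhds.congr fun n => (bump_eq_one F hmem).symm
    · rw [indicator_of_notMem (fun h => hmem (Set.mem_preimage.1 h))]
      have hpos : 0 < infDist (X ω) F := (hF.notMem_iff_infDist_pos hne).1 hmem
      have htend : Tendsto (fun n : ℕ => ((n:ℝ)+1)⁻¹) atTop (𝓝 0) :=
        tendsto_one_div_add_atTop_nhds_zero_nat.congr (fun n => by rw [one_div])
      refine tendsto_const_nhds.congr' ?_
      filter_upwards [htend.eventually_lt_const hpos] with n hn
      exact (bump_eq_zero (by positivity) F hn.le).symm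

end helpers

lemma integral_bump_eq {Ω : Type*} [MeasurableSpace Ω] (P : Measure Ω) [IsProbabilityMeasure P]
    (V W : Ω → ℝ) (Vn : ℕ → Ω → ℝ) (bn : ℕ → ℝ) (b : ℝ)
    (hVnmeas : ∀ n, Measurable (Vn n))
    (hVnV : ConvInDist P Vn V)
    (hVnbW : ConvInDist P (fun n ω => Vn n ω + bn n) W)
    (φ : ℕ → ℕ) (hφ : Tendsto φ atTop atTop)
    (hb : Tendsto (fun k => bn (φ k)) atTop (𝓝 b))
    {δ : ℝ} (hδ : 0 < δ) (F : Set ℝ) :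
    ∫ ω, bump δ F (W ω) ∂P = ∫ ω, bump δ F (V ω + b) ∂P := by
  set g := bump δ F with hg
  have hA : Tendsto (fun k => ∫ ω, g (Vn (φ k) ω + bn (φ k)) ∂P) atTop
      (𝓝 (∫ ω, g (W ω) ∂P)) := (hVnbW g).comp hφ
  -- translated test function
  set g' : BoundedContinuousFunction ℝ ℝ :=
    g.compContinuous (ContinuousMap.addRight b) with hg'
  have hg'app : ∀ x : ℝ, g' x = g (x + b) := fun x => rfl
  have hB : Tendsto (fun k => ∫ ω, g (Vn (φ k) ω + b) ∂P) atTop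
      (𝓝 (∫ ω, g (V ω + b) ∂P)) := (hVnV g').comp hφ
  -- the difference tends to zero
  have hdiff : Tendsto (fun k =>
      (∫ ω, g (Vn (φ k) ω + bn (φ k)) ∂P) - ∫ ω, g (Vn (φ k) ω + b) ∂P) atTop (𝓝 0) := by
    have hbd : ∀ k, ‖(∫ ω, g (Vn (φ k) ω + bn (φ k)) ∂P) - ∫ ω, g (Vn (φ k) ω + b) ∂P‖
        ≤ |bn (φ k) - b| / δ := by
      intro k
      have hint1 : Integrable (fun ω => g (Vn (φ k) ω + bn (φ k))) P :=
        integrable_comp_bcf P g ((hVnmeas (φ k)).add_const _)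
      have hint2 : Integrable (fun ω => g (Vn (φ k) ω + b)) P :=
        integrable_comp_bcf P g ((hVnmeas (φ k)).add_const _)
      rw [← integral_sub hint1 hint2]
      calc ‖∫ ω, (g (Vn (φ k) ω + bn (φ k)) - g (Vn (φ k) ω + b)) ∂P‖
          ≤ |bn (φ k) - b| / δ * (P Set.univ).toReal := by
            apply norm_integral_le_of_norm_le_const
            refine ae_of_all _ fun ω => ?_
            rw [Real.norm_eq_abs]
            have := bump_lip hδ F (Vn (φ k) ω + bn (φ k)) (Vn (φ k) ω + b)
            simpa [add_sub_add_left_eq_sub] using this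
        _ = |bn (φ k) - b| / δ := by simp
    have hz : Tendsto (fun k => |bn (φ k) - b| / δ) atTop (𝓝 0) := by
      have := ((hb.sub_const b).abs).div_const δ
      simpa using this
    exact squeeze_zero_norm hbd hz
  -- combine
  have : Tendsto (fun k => ∫ ω, g (Vn (φ k) ω + bn (φ k)) ∂P) atTop
      (𝓝 (0 + ∫ ω, g (V ω + b) ∂P)) := by
    have := hdiff.add hB
    refine this.congr fun k => ?_
    ring
  rw [zero_add] at this
  exact tendsto_nhds_unique hA this

lemma law_eq_of_subseq {Ω : Type*} [MeasurableSpace Ω] (P : Measure Ω) [IsProbabilityMeasure P]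
    (V W : Ω → ℝ) (Vn : ℕ → Ω → ℝ) (bn : ℕ → ℝ) (b : ℝ)
    (hVmeas : Measurable V) (hWmeas : Measurable W) (hVnmeas : ∀ n, Measurable (Vn n))
    (hVnV : ConvInDist P Vn V)
    (hVnbW : ConvInDist P (fun n ω => Vn n ω + bn n) W)
    (φ : ℕ → ℕ) (hφ : Tendsto φ atTop atTop)
    (hb : Tendsto (fun k => bn (φ k)) atTop (𝓝 b)) :
    P.map W = P.map (fun ω => V ω + b) := by
  have hVb : Measurable fun ω => V ω + b := hVmeas.add_const b
  apply ext_of_generate_finite {s : Set ℝ | IsClosed s} ?_ isPiSystem_isClosed ?_ ?_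
  · rw [BorelSpace.measurable_eq (α := ℝ), borel_eq_generateFrom_isClosed]
  · intro F hF
    rw [Measure.map_apply hWmeas hF.measurableSet, Measure.map_apply hVb hF.measurableSet]
    rcases F.eq_empty_or_nonempty with rfl | hne
    · simp
    have h1 := tendsto_integral_bump P hWmeas hF hne
    have h2 := tendsto_integral_bump P hVb hF hne
    have h2' : Tendsto (fun n : ℕ => ∫ ω, bump ((n:ℝ)+1)⁻¹ F (W ω) ∂P) atTop
        (𝓝 (P ((fun ω => V ω + b) ⁻¹' F)).toReal) := by
      refine h2.congr fun n => ?_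
      exact (integral_bump_eq P V W Vn bn b hVnmeas hVnV hVnbW φ hφ hb
        (by positivity) F).symm
    have := tendsto_nhds_unique h1 h2'
    exact (ENNReal.toReal_eq_toReal_iff' (measure_ne_top _ _) (measure_ne_top _ _)).1 this
  · rw [Measure.map_apply hWmeas MeasurableSet.univ,
      Measure.map_apply hVb MeasurableSet.univ]
    simp


lemma translate_cancel {Ω : Type*} [MeasurableSpace Ω] {P : Measure Ω} [IsProbabilityMeasure P]
    {V : Ω → ℝ} (hV : Measurable V) {a b : ℝ}
    (h : P.map (fun ω => V ω + a) = P.map (fun ω => V ω + b)) : a = b := by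
  by_contra hab
  set μ := P.map V with hμ
  have hμprob : IsProbabilityMeasure μ := Measure.isProbabilityMeasure_map hV.aemeasurable
  have hmapr : ∀ r : ℝ, μ.map (· + r) = P.map (fun ω => V ω + r) := by
    intro r
    rw [hμ, Measure.map_map (measurable_add_const r) hV]
    rfl
  have hmm : ∀ (r s : ℝ), (μ.map (· + r)).map (· + s) = μ.map (· + (r + s)) := by
    intro r s
    rw [Measure.map_map (measurable_add_const s) (measurable_add_const r)]
    congr 1
    funext x
    simp [add_assoc]
  have hid : μ.map (· + (0:ℝ)) = μ := by simp
  have hneg : ∀ r : ℝ, μ.map (· + r) = μ → μ.map (· + (-r)) = μ := by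
    intro r hr
    have h2 := congrArg (fun ν : Measure ℝ => ν.map (· + (-r))) hr
    rw [hmm, add_neg_cancel, hid] at h2
    exact h2.symm
  have hc : μ.map (· + (a - b)) = μ := by
    have h0 : μ.map (· + a) = μ.map (· + b) := by rw [hmapr, hmapr, h]
    have h2 := congrArg (fun ν : Measure ℝ => ν.map (· + (-b))) h0
    rw [hmm, hmm, add_neg_cancel, hid] at h2
    rw [sub_eq_add_neg]
    exact h2
  have hcne : a - b ≠ 0 := sub_ne_zero.2 hab
  set d := |a - b| with hd
  have hdpos : 0 < d := abs_pos.2 hcne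
  have hcd : μ.map (· + d) = μ := by
    rcases abs_cases (a - b) with ⟨he, _⟩ | ⟨he, _⟩
    · rw [hd, he]; exact hc
    · rw [hd, he]; exact hneg _ hc
  have hnat : ∀ n : ℕ, μ.map (· + (n:ℝ)*d) = μ := by
    intro n
    induction n with
    | zero => simp only [Nat.cast_zero, zero_mul]; exact hid

    | succ n ih =>
      have h2 := congrArg (fun ν : Measure ℝ => ν.map (· + d)) ih
      rw [hmm, hcd] at h2
      have he : ((n+1 : ℕ):ℝ)*d = (n:ℝ)*d + d := by push_cast; ring
      rw [he]
      exact h2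
  have hint : ∀ k : ℤ, μ.map (· + (k:ℝ)*d) = μ := by
    intro k
    obtain ⟨m, rfl | rfl⟩ := Int.eq_nat_or_neg k
    · have := hnat m
      rwa [show (((m:ℤ)):ℝ) = (m:ℝ) by push_cast; ring]
    · have := hneg _ (hnat m)
      rwa [show ((-(m:ℤ) : ℤ):ℝ)*d = -((m:ℝ)*d) by push_cast; ring]
  have hIco : ∀ k : ℤ, μ (Ico ((k:ℝ)*d) (((k:ℝ)+1)*d)) = μ (Ico 0 d) := by
    intro k
    have h1 := hint (-k)
    have h2 := congrArg (fun ν : Measure ℝ => ν (Ico (0:ℝ) d)) h1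
    rw [Measure.map_apply (measurable_add_const _) measurableSet_Ico] at h2
    have hpre : (· + ((-k : ℤ):ℝ)*d) ⁻¹' Ico 0 d = Ico ((k:ℝ)*d) (((k:ℝ)+1)*d) := by
      ext x
      simp only [mem_preimage, mem_Ico, Int.cast_neg]
      constructor
      · rintro ⟨hx1, hx2⟩
        constructor <;> nlinarith
      · rintro ⟨hx1, hx2⟩
        constructor <;> nlinarith
    rw [hpre] at h2
    exact h2
  have hcov : (⋃ k : ℤ, Ico ((k:ℝ)*d) (((k:ℝ)+1)*d)) = univ := by
    refine eq_univ_of_forall fun x => ?_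
    refine mem_iUnion.2 ⟨⌊x/d⌋, ?_, ?_⟩
    · have := Int.floor_le (x/d)
      calc ((⌊x/d⌋ : ℤ):ℝ)*d ≤ (x/d)*d := by nlinarith
        _ = x := by field_simp
    · have := Int.lt_floor_add_one (x/d)
      calc x = (x/d)*d := by field_simp
        _ < ((⌊x/d⌋:ℝ)+1)*d := by nlinarith
  have hdisj : Pairwise (Function.onFun Disjoint
      fun k : ℤ => Ico ((k:ℝ)*d) (((k:ℝ)+1)*d)) := by
    intro k l hkl
    have : ∀ k l : ℤ, k < l → Disjoint (Ico ((k:ℝ)*d) (((k:ℝ)+1)*d))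
        (Ico ((l:ℝ)*d) (((l:ℝ)+1)*d)) := by
      intro k l hlt
      apply Set.Ico_disjoint_Ico.2
      have h1 : (k:ℝ) + 1 ≤ (l:ℝ) := by exact_mod_cast hlt
      have : ((k:ℝ)+1)*d ≤ (l:ℝ)*d := by nlinarith
      calc min (((k:ℝ)+1)*d) (((l:ℝ)+1)*d) ≤ ((k:ℝ)+1)*d := min_le_left _ _
        _ ≤ (l:ℝ)*d := this
        _ ≤ max ((k:ℝ)*d) ((l:ℝ)*d) := le_max_right _ _
    rcases lt_or_gt_of_ne hkl with hlt | hlt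
    · exact this k l hlt
    · exact (this l k hlt).symm
  have hsum : μ univ = ∑' k : ℤ, μ (Ico ((k:ℝ)*d) (((k:ℝ)+1)*d)) := by
    rw [← hcov]
    exact measure_iUnion hdisj fun k => measurableSet_Ico
  rw [measure_univ] at hsum
  simp_rw [hIco] at hsum
  by_cases hm : μ (Ico 0 d) = 0
  · rw [hm] at hsum
    simp at hsum
  · rw [ENNReal.tsum_const_eq_top_of_ne_zero hm] at hsum
    exact ENNReal.one_ne_top hsum

lemma eventually_abs_bn_le {Ω : Type*} [MeasurableSpace Ω] (P : Measure Ω)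
    [IsProbabilityMeasure P]
    (V W : Ω → ℝ) (Vn : ℕ → Ω → ℝ) (bn : ℕ → ℝ)
    (hVmeas : Measurable V) (hWmeas : Measurable W) (hVnmeas : ∀ n, Measurable (Vn n))
    (hVnV : ConvInDist P Vn V)
    (hVnbW : ConvInDist P (fun n ω => Vn n ω + bn n) W) :
    ∃ C : ℝ, 0 < C ∧ ∀ᶠ n in atTop, |bn n| ≤ C := by
  -- choose M with both tail bounds
  obtain ⟨M, hM1, hMV, hMW⟩ : ∃ M : ℝ, 1 ≤ M ∧
      (3/4 : ℝ) < (P (V ⁻¹' Icc (-M) M)).toReal ∧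
      (3/4 : ℝ) < (P (W ⁻¹' Icc (-M) M)).toReal := by
    have hmono : ∀ X : Ω → ℝ, Monotone (fun m : ℕ => X ⁻¹' Icc (-(m:ℝ)) m) := by
      intro X m m' hmm'
      apply preimage_mono
      apply Icc_subset_Icc <;> · simp; exact_mod_cast hmm'
    have hcup : ∀ X : Ω → ℝ, (⋃ m : ℕ, X ⁻¹' Icc (-(m:ℝ)) m) = univ := by
      intro X
      refine eq_univ_of_forall fun ω => ?_
      obtain ⟨m, hm⟩ := exists_nat_ge (|X ω|)
      exact mem_iUnion.2 ⟨m, by simpa [mem_Icc, abs_le] using abs_le.1 hm⟩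
    have key : ∀ X : Ω → ℝ, Tendsto (fun m : ℕ => (P (X ⁻¹' Icc (-(m:ℝ)) m)).toReal)
        atTop (𝓝 1) := by
      intro X
      have h1 : Tendsto (fun m : ℕ => P (X ⁻¹' Icc (-(m:ℝ)) m)) atTop
          (𝓝 (P (⋃ m : ℕ, X ⁻¹' Icc (-(m:ℝ)) m))) :=
        tendsto_measure_iUnion_atTop (hmono X)
      rw [hcup X, measure_univ] at h1
      have h2 := (ENNReal.tendsto_toReal ENNReal.one_ne_top).comp h1
      simpa [Function.comp_def] using h2
    have hV' := (key V).eventually_const_lt (by norm_num : (3/4:ℝ) < 1)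
    have hW' := (key W).eventually_const_lt (by norm_num : (3/4:ℝ) < 1)
    have hM' : ∀ᶠ m : ℕ in atTop, 1 ≤ (m:ℝ) := by
      filter_upwards [eventually_ge_atTop 1] with m hm
      exact_mod_cast hm
    obtain ⟨m, h1, h2⟩ := (hV'.and (hW'.and hM')).exists
    exact ⟨m, h2.2, h1, h2.1⟩
  have hM0 : (0:ℝ) < M := by linarith
  set g₁ := bump 1 (Icc (-M) M) with hg₁
  -- lower bounds for the limits
  have hlow : ∀ (X : Ω → ℝ), Measurable X → (3/4 : ℝ) < (P (X ⁻¹' Icc (-M) M)).toReal →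
      (3/4 : ℝ) < ∫ ω, g₁ (X ω) ∂P := by
    intro X hX h34
    have hle : (P (X ⁻¹' Icc (-M) M)).toReal ≤ ∫ ω, g₁ (X ω) ∂P := by
      rw [← measureReal_def, ← integral_indicator_one (hX measurableSet_Icc)]
      apply integral_mono ((integrable_const (1:ℝ)).indicator (hX measurableSet_Icc))
        (integrable_comp_bcf P g₁ hX)
      intro ω
      by_cases hmem : X ω ∈ Icc (-M) M
      · rw [indicator_of_mem (mem_preimage.2 hmem)]
        simp [hg₁, bump_eq_one _ hmem]
      · rw [indicator_of_notMem (fun hc => hmem (mem_preimage.1 hc))]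
        exact bump_nonneg _ _ _
    linarith
  -- upper bounds: g₁ vanishes outside K = Icc (-(M+1)) (M+1)
  have hvanish : ∀ x : ℝ, x ∉ Icc (-(M+1)) (M+1) → g₁ x = 0 := by
    intro x hx
    apply bump_eq_zero one_pos
    by_contra hlt
    push_neg at hlt
    obtain ⟨y, hy, hdy⟩ := (infDist_lt_iff ⟨0, by simp [hM0.le]⟩).1 hlt
    rw [mem_Icc] at hy
    rw [Real.dist_eq, abs_lt] at hdy
    rw [mem_Icc] at hx
    push_neg at hx
    rcases lt_or_ge x (-(M+1)) with hc | hc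
    · linarith [hy.1]
    · have := hx hc
      linarith [hy.2]
  have hupp : ∀ (X : Ω → ℝ), Measurable X →
      ∫ ω, g₁ (X ω) ∂P ≤ (P (X ⁻¹' Icc (-(M+1)) (M+1))).toReal := by
    intro X hX
    rw [← measureReal_def, ← integral_indicator_one (hX measurableSet_Icc)]
    apply integral_mono (integrable_comp_bcf P g₁ hX)
      ((integrable_const (1:ℝ)).indicator (hX measurableSet_Icc))
    intro ω
    by_cases hmem : X ω ∈ Icc (-(M+1)) (M+1)
    · rw [indicator_of_mem (mem_preimage.2 hmem)]
      simpa using bump_le_one _ _ _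
    · rw [indicator_of_notMem (fun hc => hmem (mem_preimage.1 hc))]
      simp only
      rw [hvanish _ hmem]
  -- eventual lower bounds along the sequences
  have hev1 : ∀ᶠ n in atTop, (1/2 : ℝ) < ∫ ω, g₁ (Vn n ω) ∂P :=
    (hVnV g₁).eventually_const_lt (by linarith [hlow V hVmeas hMV])
  have hev2 : ∀ᶠ n in atTop, (1/2 : ℝ) < ∫ ω, g₁ (Vn n ω + bn n) ∂P :=
    (hVnbW g₁).eventually_const_lt (by linarith [hlow W hWmeas hMW])
  refine ⟨2*(M+1), by linarith, ?_⟩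
  filter_upwards [hev1, hev2] with n h1 h2
  by_contra hcon
  push_neg at hcon
  set K := Icc (-(M+1)) (M+1) with hK
  set A := Vn n ⁻¹' K with hA
  set B := (fun ω => Vn n ω + bn n) ⁻¹' K with hB
  have hAmeas : MeasurableSet A := (hVnmeas n) measurableSet_Icc
  have hBmeas : MeasurableSet B := ((hVnmeas n).add_const _) measurableSet_Icc
  have hAB : Disjoint A B := by
    rw [Set.disjoint_left]
    intro ω hωA hωB
    rw [hA, mem_preimage, hK, mem_Icc] at hωA
    rw [hB, mem_preimage, hK, mem_Icc] at hωB
    rcases abs_cases (bn n) with ⟨he, _⟩ | ⟨he, _⟩ <;> rw [he] at hcon <;> linarith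
  have hPA : (1/2 : ℝ) < (P A).toReal := lt_of_lt_of_le h1 (hupp _ (hVnmeas n))
  have hPB : (1/2 : ℝ) < (P B).toReal := lt_of_lt_of_le h2 (hupp _ ((hVnmeas n).add_const _))
  have hsum : (P A).toReal + (P B).toReal ≤ 1 := by
    rw [← ENNReal.toReal_add (measure_ne_top _ _) (measure_ne_top _ _), ← measure_union hAB hBmeas]
    have := measure_mono (subset_univ (A ∪ B)) (μ := P)
    rw [measure_univ] at this
    calc (P (A ∪ B)).toReal ≤ ENNReal.toReal 1 := ENNReal.toReal_mono (by simp) this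
      _ = 1 := by simp
  linarith

/-- Convergence of Types (special case): if `V` is nondegenerate, `Vₙ ⇒ V` and
`Vₙ + bₙ ⇒ W`, then `b = lim bₙ` exists and `W =ᵈ V + b`. -/
theorem stmt_4 {Ω : Type*} [MeasurableSpace Ω] (P : Measure Ω) [IsProbabilityMeasure P]
    (V W : Ω → ℝ) (Vn : ℕ → Ω → ℝ) (bn : ℕ → ℝ)
    (hVmeas : Measurable V) (hWmeas : Measurable W) (hVnmeas : ∀ n, Measurable (Vn n))
    (hnondeg : ∀ c : ℝ, P.map V ≠ Measure.dirac c)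
    (hVnV : ConvInDist P Vn V)
    (hVnbW : ConvInDist P (fun n ω => Vn n ω + bn n) W) :
    ∃ b : ℝ, Tendsto bn atTop (𝓝 b) ∧
      P.map W = P.map (fun ω => V ω + b) := by
  obtain ⟨C, hC0, hCev⟩ := eventually_abs_bn_le P V W Vn bn hVmeas hWmeas hVnmeas hVnV hVnbW
  -- one limit point b0
  have hfreq : ∃ᶠ n in atTop, bn n ∈ Icc (-C) C := by
    apply (hCev.mono ?_).frequently
    intro n hn
    rw [mem_Icc]
    exact abs_le.1 hn
  obtain ⟨b0, _, φ0, hφ0mono, hφ0lim⟩ := (isCompact_Icc (a := -C) (b := C)).tendsto_subseq' hfreq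
  have hlaw0 : P.map W = P.map (fun ω => V ω + b0) :=
    law_eq_of_subseq P V W Vn bn b0 hVmeas hWmeas hVnmeas hVnV hVnbW φ0
      hφ0mono.tendsto_atTop hφ0lim
  refine ⟨b0, ?_, hlaw0⟩
  apply tendsto_of_subseq_tendsto
  intro ns hns
  have hfreq2 : ∃ᶠ k in atTop, bn (ns k) ∈ Icc (-C) C := by
    apply ((hns.eventually hCev).mono ?_).frequently
    intro k hk
    rw [mem_Icc]
    exact abs_le.1 hk
  obtain ⟨a, _, ms, hmsmono, hmslim⟩ :=
    (isCompact_Icc (a := -C) (b := C)).tendsto_subseq' hfreq2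
  have hlawa : P.map W = P.map (fun ω => V ω + a) :=
    law_eq_of_subseq P V W Vn bn a hVmeas hWmeas hVnmeas hVnV hVnbW (ns ∘ ms)
      (hns.comp hmsmono.tendsto_atTop) hmslim
  have hab : a = b0 := translate_cancel hVmeas (hlawa.symm.trans hlaw0)
  exact ⟨ms, hab ▸ hmslim⟩
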